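/- Let p be a prime, G a finite group, H a subgroup of index p that is normal in G, and χ an irreducible complex character of G such that χ(g) = 0 for all g ∉ H. Then there exist p distinct irreducible characters ψ₁,…,ψ_p of H such that the restriction χ|_H = ψ₁ + ⋯ + ψ_p and Ind_H^G(ψᵢ) = χ for every i. -/

import Mathlib

open scoped Classical

open CategoryTheory Module Representation

section Aux

variable {K : Type} [Group K] [Fintype K]

noncomputable instance : Invertible ((Fintype.card K : ℂ)) :=
  invertibleOfNonzero (by exact_mod_cast Fintype.card_ne_zero)

theorem homDim (X Y : FDRep ℂ K) :
    (Fintype.card K : ℂ)⁻¹ * ∑ g : K, X.character g * Y.character g⁻¹ =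
      finrank ℂ (Y ⟶ X) := by
  conv_lhs =>
    enter [2, 2, g]
    rw [mul_comm, ← FDRep.char_dual, ← Pi.mul_apply, ← FDRep.char_tensor]
    rw [FDRep.char_iso (FDRep.dualTensorIsoLinHom Y.ρ X)]
  rw [show ((Fintype.card K : ℂ))⁻¹ * (∑ g : K, (FDRep.of (linHom Y.ρ X.ρ)).character g)
      = ⅟(Fintype.card K : ℂ) • ∑ g : K, (FDRep.of (linHom Y.ρ X.ρ)).character g by
    rw [invOf_eq_inv, smul_eq_mul]]
  rw [invOf_eq_inv, smul_eq_mul, Fintype.card_eq_nat_card, FDRep.average_char_eq_finrank_invariants,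
    ← LinearEquiv.finrank_eq (linHom.invariantsEquivFDRepHom Y X), FDRep.of_ρ']

noncomputable def subRep (A : FDRep ℂ K) (U : Submodule ℂ A)
    (hU : ∀ g : K, ∀ u ∈ U, A.ρ g u ∈ U) : FDRep ℂ K :=
  FDRep.of {
    toFun := fun g => (A.ρ g).restrict (hU g)
    map_one' := by ext x; simp [LinearMap.restrict_apply]
    map_mul' := fun g h => by ext x; simp [LinearMap.restrict_apply] }

noncomputable def inclMor (A : FDRep ℂ K) (U : Submodule ℂ A)
    (hU : ∀ g : K, ∀ u ∈ U, A.ρ g u ∈ U) : subRep A U hU ⟶ A where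
  hom := ConcreteCategory.ofHom U.subtype
  comm := fun g => by ext x; rfl

theorem inclMor_mono (A : FDRep ℂ K) (U : Submodule ℂ A)
    (hU : ∀ g : K, ∀ u ∈ U, A.ρ g u ∈ U) : Mono (inclMor A U hU) := by
  constructor
  intro Z g h eq
  ext1
  have : U.subtype ∘ₗ g.hom.hom.hom = U.subtype ∘ₗ h.hom.hom.hom := congrArg (fun φ => φ.hom.hom.hom) eq
  ext x
  exact Subtype.ext (LinearMap.congr_fun this x)

theorem inclMor_ne_zero (A : FDRep ℂ K) (U : Submodule ℂ A)
    (hU : ∀ g : K, ∀ u ∈ U, A.ρ g u ∈ U) (hne : U ≠ ⊥) :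
    inclMor A U hU ≠ 0 := by
  intro h
  obtain ⟨u, hu, hune⟩ := Submodule.exists_mem_ne_zero_of_ne_bot hne
  have : U.subtype ⟨u, hu⟩ = 0 := by
    rw [show U.subtype = (0 : _ →ₗ[ℂ] _) from congrArg (fun φ => φ.hom.hom.hom) h]; rfl
  exact hune (by simpa using this)

/-- If `A` is simple, every invariant submodule is trivial. -/
theorem invariant_trivial_of_simple (A : FDRep ℂ K) [Simple A] (U : Submodule ℂ A)
    (hU : ∀ g : K, ∀ u ∈ U, A.ρ g u ∈ U) : U = ⊥ ∨ U = ⊤ := by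
  by_cases hbot : U = ⊥
  · exact Or.inl hbot
  · right
    haveI := inclMor_mono A U hU
    haveI : IsIso (inclMor A U hU) := isIso_of_mono_of_nonzero (inclMor_ne_zero A U hU hbot)
    have hsurj : Function.Surjective ((inclMor A U hU).hom) := by
      intro a
      refine ⟨(CategoryTheory.inv (inclMor A U hU)).hom a, ?_⟩
      have := congrArg (fun φ => φ.hom.hom.hom) (IsIso.inv_hom_id (inclMor A U hU))
      exact LinearMap.congr_fun this a
    rw [Submodule.eq_top_iff']
    intro x
    obtain ⟨u, rfl⟩ := hsurj x
    exact u.2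

/-- A representation with no nontrivial invariant submodule is simple. -/
theorem simple_of_invariant_trivial (A : FDRep ℂ K) (hnt : Nontrivial A)
    (hs : ∀ (U : Submodule ℂ A), (∀ g : K, ∀ u ∈ U, A.ρ g u ∈ U) → U = ⊥ ∨ U = ⊤) :
    Simple A := by
  constructor
  intro Y f hm
  constructor
  · intro hiso h0
    have h1 : 𝟙 A = 0 := by
      rw [h0] at hiso
      have h2 := IsIso.inv_hom_id (0 : Y ⟶ A)
      rw [Limits.comp_zero] at h2
      exact h2.symm
    have hid : (LinearMap.id : A →ₗ[ℂ] A) = 0 := congrArg (fun φ => φ.hom.hom.hom) h1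
    obtain ⟨x, y, hxy⟩ := hnt.exists_pair_ne
    have : ∀ z : A, z = 0 := fun z => LinearMap.congr_fun hid z
    exact hxy ((this x).trans (this y).symm)
  · intro hne
    have hinj : Function.Injective f.hom.hom.hom := by
      rw [← LinearMap.ker_eq_bot]
      by_contra hker
      have hK : ∀ g : K, ∀ u ∈ LinearMap.ker f.hom.hom.hom, Y.ρ g u ∈ LinearMap.ker f.hom.hom.hom := by
        intro g u hu
        simp only [LinearMap.mem_ker] at hu ⊢
        have h3 : f.hom.hom.hom (Y.ρ g u) = A.ρ g (f.hom.hom.hom u) := LinearMap.congr_fun (congrArg (fun φ => φ.hom.hom) (f.comm g)) u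
        rw [hu, map_zero] at h3
        exact h3
      have hz : inclMor Y _ hK ≫ f = (0 : subRep Y _ hK ⟶ A) := by
        ext1; ext x
        exact x.2
      have h0 : inclMor Y _ hK ≫ f = (0 : subRep Y _ hK ⟶ Y) ≫ f := by
        rw [hz, Limits.zero_comp]
      exact inclMor_ne_zero Y _ hK hker (hm.right_cancellation _ _ h0)
    have hRinv : ∀ g : K, ∀ u ∈ LinearMap.range f.hom.hom.hom, A.ρ g u ∈ LinearMap.range f.hom.hom.hom := by
      intro g u hu
      obtain ⟨y, rfl⟩ := hu
      exact ⟨Y.ρ g y, (LinearMap.congr_fun (congrArg (fun φ => φ.hom.hom) (f.comm g)) y : _)⟩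
    have hrne : LinearMap.range f.hom.hom.hom ≠ ⊥ := by
      intro hr
      apply hne
      ext1; ext y
      have : f.hom.hom.hom y ∈ LinearMap.range f.hom.hom.hom := ⟨y, rfl⟩
      rw [hr] at this
      simpa using this
    have hrtop : LinearMap.range f.hom.hom.hom = ⊤ := (hs _ hRinv).resolve_left hrne
    have hsurj : Function.Surjective f.hom.hom.hom := LinearMap.range_eq_top.mp hrtop
    let e : Y ≃ₗ[ℂ] A := LinearEquiv.ofBijective f.hom.hom.hom ⟨hinj, hsurj⟩
    have he : ∀ y : Y, e y = f.hom.hom.hom y := fun _ => rfl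
    refine ⟨⟨{ hom := ConcreteCategory.ofHom e.symm.toLinearMap, comm := fun g => ?_ }, ?_, ?_⟩⟩
    · ext a
      show e.symm (A.ρ g a) = Y.ρ g (e.symm a)
      apply hinj
      rw [← he, ← he]
      rw [e.apply_symm_apply]
      have := LinearMap.congr_fun (congrArg (fun φ => φ.hom.hom) (f.comm g)) (e.symm a)
      have h2 : f.hom.hom.hom (Y.ρ g (e.symm a)) = A.ρ g (f.hom.hom.hom (e.symm a)) := this
      rw [he, h2, ← he, e.apply_symm_apply]
    · ext1; ext y
      exact e.symm_apply_apply y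
    · ext1; ext a
      exact e.apply_symm_apply a

/-- Maschke-type averaging: an equivariant projection onto an invariant submodule. -/
theorem exists_equivariant_proj (A : FDRep ℂ K) (U : Submodule ℂ A)
    (hU : ∀ g : K, ∀ u ∈ U, A.ρ g u ∈ U) :
    ∃ q : A →ₗ[ℂ] A, (∀ g : K, q * A.ρ g = A.ρ g * q) ∧ (∀ x, q x ∈ U) ∧ ∀ u ∈ U, q u = u := by
  obtain ⟨U', hcompl⟩ := Submodule.exists_isCompl U
  set q0 : A →ₗ[ℂ] A := U.subtype ∘ₗ (U.projectionOnto U' hcompl) with hq0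
  have hq0U : ∀ x, q0 x ∈ U := fun x => ((U.projectionOnto U' hcompl) x).2
  have hq0id : ∀ u ∈ U, q0 u = u := by
    intro u hu
    show (U.subtype) ((U.projectionOnto U' hcompl) u) = u
    rw [show u = ((⟨u, hu⟩ : U) : A) from rfl, Submodule.projectionOnto_apply_left hcompl]
    rfl
  set q : A →ₗ[ℂ] A :=
    (Fintype.card K : ℂ)⁻¹ • ∑ s : K, A.ρ s * q0 * A.ρ s⁻¹ with hq
  have hcK : (Fintype.card K : ℂ) ≠ 0 := by exact_mod_cast Fintype.card_ne_zero
  have hrmul : ∀ s t : K, A.ρ s * A.ρ t = A.ρ (s * t) := fun s t => (map_mul A.ρ s t).symm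
  refine ⟨q, ?_, ?_, ?_⟩
  · intro g
    rw [hq, Algebra.smul_mul_assoc, Algebra.mul_smul_comm]
    congr 1
    rw [Finset.sum_mul, Finset.mul_sum]
    refine Fintype.sum_bijective (fun s => g⁻¹ * s) (Group.mulLeft_bijective g⁻¹) _ _ ?_
    intro s
    calc A.ρ s * q0 * A.ρ s⁻¹ * A.ρ g
        = A.ρ s * q0 * (A.ρ s⁻¹ * A.ρ g) := by rw [mul_assoc]
      _ = A.ρ s * q0 * A.ρ (s⁻¹ * g) := by rw [hrmul]
      _ = A.ρ g * A.ρ (g⁻¹ * s) * q0 * A.ρ (s⁻¹ * g) := by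
            rw [hrmul, mul_inv_cancel_left]
      _ = A.ρ g * (A.ρ (g⁻¹ * s) * q0 * A.ρ ((g⁻¹ * s)⁻¹)) := by
            rw [mul_inv_rev, inv_inv, mul_assoc (A.ρ g), mul_assoc (A.ρ (g⁻¹ * s)),
              mul_assoc (A.ρ g), mul_assoc (A.ρ (g⁻¹ * s))]
  · intro x
    rw [hq]
    rw [LinearMap.smul_apply, LinearMap.sum_apply]
    refine Submodule.smul_mem _ _ (Submodule.sum_mem _ fun s _ => ?_)
    exact hU s _ (hq0U _)
  · intro u hu
    rw [hq]
    have hterm : ∀ s : K, (A.ρ s * q0 * A.ρ s⁻¹) u = u := by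
      intro s
      show A.ρ s (q0 (A.ρ s⁻¹ u)) = u
      rw [hq0id _ (hU s⁻¹ u hu)]
      calc A.ρ s (A.ρ s⁻¹ u) = (A.ρ s * A.ρ s⁻¹) u := rfl
        _ = u := by rw [hrmul, mul_inv_cancel, map_one]; rfl
    rw [LinearMap.smul_apply, LinearMap.sum_apply]
    simp only [hterm]
    rw [Finset.sum_const, Finset.card_univ, ← Nat.cast_smul_eq_nsmul ℂ, smul_smul,
      inv_mul_cancel₀ hcK, one_smul]

/-- Trace of a restriction to the range of an idempotent commuting with the map. -/
theorem trace_restrict_eq {E : Type} [AddCommGroup E] [Module ℂ E] [FiniteDimensional ℂ E]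
    (P f : E →ₗ[ℂ] E) (hP : P ∘ₗ P = P)
    (hf : ∀ u ∈ LinearMap.range P, f u ∈ LinearMap.range P) :
    LinearMap.trace ℂ _ (f.restrict hf) = LinearMap.trace ℂ E (f ∘ₗ P) := by
  set ι : LinearMap.range P →ₗ[ℂ] E := (LinearMap.range P).subtype
  set π : E →ₗ[ℂ] LinearMap.range P := P.codRestrict _ (LinearMap.mem_range_self P)
  have hdecomp : f ∘ₗ P = ι ∘ₗ (f.restrict hf ∘ₗ π) := by
    ext x
    rfl
  rw [hdecomp, LinearMap.trace_comp_comm']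
  have hπι : (f.restrict hf ∘ₗ π) ∘ₗ ι = f.restrict hf := by
    apply LinearMap.ext
    rintro ⟨x, hx⟩
    show f.restrict hf (π x) = f.restrict hf ⟨x, hx⟩
    congr 1
    apply Subtype.ext
    show P x = x
    obtain ⟨y, rfl⟩ := hx
    exact LinearMap.congr_fun hP y
  rw [hπι]

end Aux

theorem pow_natmod {M : Type*} [Monoid M] {x : M} {p : ℕ} (h : x ^ p = 1) (m : ℕ) :
    x ^ (m % p) = x ^ m := by
  conv_rhs => rw [← Nat.div_add_mod m p, pow_add, pow_mul, h, one_pow, one_mul]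

theorem pow_val_add {M : Type*} [Monoid M] {x : M} {p : ℕ} [NeZero p] (h : x ^ p = 1)
    (a b : ZMod p) : x ^ (a + b).val = x ^ a.val * x ^ b.val := by
  rw [ZMod.val_add, pow_natmod h, pow_add]

theorem pow_val_mul {M : Type*} [Monoid M] {x : M} {p : ℕ} [NeZero p] (h : x ^ p = 1)
    (a b : ZMod p) : x ^ (a * b).val = (x ^ a.val) ^ b.val := by
  rw [ZMod.val_mul, pow_natmod h, pow_mul]

theorem sum_zmod_pow {p : ℕ} [Fact p.Prime] {ω : ℂ} (hω : IsPrimitiveRoot ω p) (m : ZMod p) :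
    ∑ i : ZMod p, ω ^ (i * m).val = if m = 0 then (p : ℂ) else 0 := by
  haveI : NeZero p := ⟨(Fact.out : p.Prime).ne_zero⟩
  split_ifs with hm
  · subst hm
    simp [ZMod.card]
  · have h1 : ∑ i : ZMod p, ω ^ (i * m).val = ∑ j : ZMod p, ω ^ j.val :=
      Fintype.sum_bijective (fun i : ZMod p => i * m)
        (Equiv.mulRight₀ m hm).bijective _ _ (fun i => rfl)
    have h2 : ∑ j : ZMod p, ω ^ j.val = ∑ n ∈ Finset.range p, ω ^ n := by
      refine Finset.sum_bij' (fun j _ => j.val) (fun n _ => (n : ZMod p)) ?_ ?_ ?_ ?_ ?_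
      · intro j _; exact Finset.mem_range.mpr (ZMod.val_lt j)
      · intro n _; exact Finset.mem_univ _
      · intro j _; exact ZMod.natCast_rightInverse j
      · intro n hn; exact ZMod.val_cast_of_lt (Finset.mem_range.mp hn)
      · intro j _; rfl
    rw [h1, h2, geom_sum_eq (hω.ne_one (Fact.out : p.Prime).one_lt), hω.pow_eq_one, sub_self,
      zero_div]

theorem card_fiber_eq {G : Type} [Group G] [Fintype G] (H : Subgroup G) (q0 : G ⧸ H) :
    Fintype.card {x : G // QuotientGroup.mk x = q0} = Fintype.card H := by
  obtain ⟨x0, rfl⟩ := QuotientGroup.mk_surjective q0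
  apply Fintype.card_congr
  refine ⟨fun x => ⟨x0⁻¹ * x.1, (QuotientGroup.eq).mp x.2.symm⟩,
    fun h => ⟨x0 * h.1, ?_⟩, fun x => Subtype.ext (mul_inv_cancel_left x0 x.1), fun h => ?_⟩
  · exact (QuotientGroup.eq).mpr (by simpa using H.inv_mem h.2)
  · exact Subtype.ext (inv_mul_cancel_left x0 h.1)



/-- `χ` is the character of an irreducible complex representation of `G`. -/
def IsIrredChar (G : Type) [Group G] (χ : G → ℂ) : Prop :=
  ∃ V : FDRep ℂ G, CategoryTheory.Simple V ∧ V.character = χ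

/-- The character of `G` induced from the class function `ψ` on the subgroup `H`. -/
noncomputable def indChar {G : Type} [Group G] [Fintype G] (H : Subgroup G)
    (ψ : H → ℂ) (g : G) : ℂ :=
  (Fintype.card H : ℂ)⁻¹ *
    ∑ x : G, if hx : x⁻¹ * g * x ∈ H then ψ ⟨x⁻¹ * g * x, hx⟩ else 0

/-- Let `p` be a prime, `G` a finite group, `H` a normal subgroup of index `p`, and `χ`
an irreducible complex character of `G` vanishing outside `H`.  Then there are `p`
distinct irreducible characters `ψ₁, …, ψ_p` of `H` with `χ|_H = ψ₁ + ⋯ + ψ_p` and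
`Ind_H^G ψᵢ = χ` for each `i`. -/
theorem stmt_10 {p : ℕ} [Fact p.Prime]
    {G : Type} [Group G] [Fintype G]
    (H : Subgroup G) [H.Normal] (hidx : H.index = p)
    (χ : G → ℂ) (hirr : IsIrredChar G χ)
    (hvanish : ∀ g : G, g ∉ H → χ g = 0) :
    ∃ ψ : Fin p → (H → ℂ), Function.Injective ψ ∧
      (∀ i, IsIrredChar H (ψ i)) ∧
      (∀ h : H, χ h = ∑ i, ψ i h) ∧
      (∀ i, indChar H (ψ i) = χ) := by
  obtain ⟨V, hV, rfl⟩ := hirr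
  haveI := hV
  have hp : p.Prime := Fact.out
  haveI : NeZero p := ⟨hp.ne_zero⟩
  have hpC : (p : ℂ) ≠ 0 := by exact_mod_cast hp.ne_zero
  have hnorm : H.Normal := ‹H.Normal›
  -- the carrier is nontrivial
  have hnt : Nontrivial V := by
    by_contra hcon
    rw [not_nontrivial_iff_subsingleton] at hcon
    apply CategoryTheory.id_nonzero V
    ext1; ext x
    exact hcon.elim _ _
  -- the quotient map to ZMod p
  haveI : Fintype (G ⧸ H) := Fintype.ofFinite _
  have hcardQ : Nat.card (G ⧸ H) = p := by rw [← hidx]; exact H.index_eq_card.symm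
  let e : (G ⧸ H) ≃* Multiplicative (ZMod p) :=
    mulEquivOfPrimeCardEq hcardQ (by simp [Nat.card_eq_fintype_card, ZMod.card])
  let d : G → ZMod p := fun g => Multiplicative.toAdd (e (QuotientGroup.mk g))
  have hd_mul : ∀ g g' : G, d (g * g') = d g + d g' := by
    intro g g'
    show Multiplicative.toAdd (e (QuotientGroup.mk (g * g'))) = _
    rw [show QuotientGroup.mk (g * g') = QuotientGroup.mk g * QuotientGroup.mk (g' : G) from rfl,
      map_mul]
    rfl
  have hd_H : ∀ g ∈ H, d g = 0 := by
    intro g hg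
    show Multiplicative.toAdd (e (QuotientGroup.mk g)) = 0
    rw [(QuotientGroup.eq_one_iff g).mpr hg, map_one]
    rfl
  have hd_one : d 1 = 0 := hd_H 1 H.one_mem
  have hd_surj : Function.Surjective d := by
    intro b
    obtain ⟨q, hq⟩ := QuotientGroup.mk_surjective (e.symm (Multiplicative.ofAdd b))
    refine ⟨q, ?_⟩
    show Multiplicative.toAdd (e (QuotientGroup.mk q)) = b
    rw [hq, e.apply_symm_apply]
    rfl
  have hd_fiber : ∀ b : ZMod p, Fintype.card {x : G // d x = b} = Fintype.card H := by
    intro b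
    rw [← card_fiber_eq H (e.symm (Multiplicative.ofAdd b))]
    apply Fintype.card_congr
    apply Equiv.subtypeEquivRight
    intro x
    constructor
    · intro hx
      have : e (QuotientGroup.mk x) = Multiplicative.ofAdd b := by
        rw [← hx]; rfl
      rw [← this, e.symm_apply_apply]
    · intro hx
      show Multiplicative.toAdd (e (QuotientGroup.mk x)) = b
      rw [hx, e.apply_symm_apply]
      rfl
  -- the primitive root
  let ω : ℂ := Complex.exp (2 * Real.pi * Complex.I / p)
  have hω : IsPrimitiveRoot ω p := Complex.isPrimitiveRoot_exp p hp.ne_zero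
  have hω1 : ω ^ p = 1 := hω.pow_eq_one
  have hωne : ω ≠ 0 := Complex.exp_ne_zero _
  -- the twisted representation
  let ρl : Representation ℂ G V :=
    { toFun := fun g => ω ^ (d g).val • V.ρ g
      map_one' := by
        show ω ^ (d 1).val • V.ρ 1 = 1
        rw [hd_one]; simp
      map_mul' := fun g g' => by
        show ω ^ (d (g * g')).val • V.ρ (g * g')
          = (ω ^ (d g).val • V.ρ g) * (ω ^ (d g').val • V.ρ g')
        rw [hd_mul, pow_val_add hω1, map_mul, smul_mul_smul_comm] }
  let Vl : FDRep ℂ G := FDRep.of ρl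
  have hVl_ρ : ∀ g, Vl.ρ g = ω ^ (d g).val • V.ρ g := fun g => rfl
  have hVlchar : Vl.character = V.character := by
    funext g
    show LinearMap.trace ℂ _ (ω ^ (d g).val • V.ρ g) = LinearMap.trace ℂ _ (V.ρ g)
    rw [map_smul]
    by_cases hg : g ∈ H
    · rw [hd_H g hg]; simp
    · have h0 : LinearMap.trace ℂ _ (V.ρ g) = 0 := hvanish g hg
      rw [h0]; simp
  have hmodV := invariant_trivial_of_simple V
  have hVlsimple : Simple Vl := by
    apply simple_of_invariant_trivial Vl hnt
    intro U hU
    apply hmodV U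
    intro g u hu
    have h1 : ρl g u ∈ U := hU g u hu
    have h2 : V.ρ g u = (ω ^ (d g).val)⁻¹ • ρl g u := by
      show V.ρ g u = _ • (ω ^ (d g).val • V.ρ g u)
      rw [smul_smul, inv_mul_cancel₀ (pow_ne_zero _ hωne), one_smul]
    rw [h2]
    exact U.smul_mem _ h1
  haveI := hVlsimple
  -- Schur
  have hEnd : finrank ℂ (V ⟶ V) = 1 := by
    rw [FDRep.finrank_hom_simple_simple V V, if_pos ⟨Iso.refl V⟩]
  have hBVV : (Fintype.card G : ℂ)⁻¹ * ∑ g : G, V.character g * V.character g⁻¹ = 1 := by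
    rw [homDim V V, hEnd]
    norm_num
  have hdimlV : finrank ℂ (Vl ⟶ V) = 1 := by
    have h1 := homDim V Vl
    rw [hVlchar] at h1
    exact_mod_cast h1.symm.trans hBVV
  -- a nonzero morphism Vl ⟶ V
  haveI : Nontrivial (Vl ⟶ V) := by
    apply Module.nontrivial_of_finrank_pos (R := ℂ)
    rw [hdimlV]
    norm_num
  obtain ⟨f0, hf0ne⟩ := exists_ne (0 : Vl ⟶ V)
  let f1 : V →ₗ[ℂ] V := f0.hom.hom.hom
  have hf1comm : ∀ (g : G) (v : V), f1 (ρl g v) = V.ρ g (f1 v) :=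
    fun g v => LinearMap.congr_fun (congrArg (fun φ => φ.hom.hom) (f0.comm g)) v
  have hf1rel : ∀ g : G, V.ρ g * f1 = ω ^ (d g).val • (f1 * V.ρ g) := by
    intro g
    ext v
    show V.ρ g (f1 v) = ω ^ (d g).val • f1 (V.ρ g v)
    rw [← hf1comm g v]
    show f1 (ω ^ (d g).val • V.ρ g v) = _
    rw [map_smul]
  have hf1ne : f1 ≠ 0 := by
    intro hz
    apply hf0ne
    ext1; ext v
    exact LinearMap.congr_fun hz v
  have hkerinv : ∀ g : G, ∀ u ∈ LinearMap.ker f1, V.ρ g u ∈ LinearMap.ker f1 := by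
    intro g u hu
    simp only [LinearMap.mem_ker] at hu ⊢
    have h1 : f1 (ρl g u) = V.ρ g (f1 u) := hf1comm g u
    rw [hu, map_zero] at h1
    have h2 : f1 (ρl g u) = ω ^ (d g).val • f1 (V.ρ g u) := by
      show f1 (ω ^ (d g).val • V.ρ g u) = _
      rw [map_smul]
    rw [h2] at h1
    rcases smul_eq_zero.mp h1 with h3 | h3
    · exact absurd h3 (pow_ne_zero _ hωne)
    · exact h3
  have hker : LinearMap.ker f1 = ⊥ := by
    rcases hmodV (LinearMap.ker f1) hkerinv with h | h
    · exact h
    · exfalso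
      apply hf1ne
      ext v
      have : v ∈ LinearMap.ker f1 := h ▸ Submodule.mem_top
      simpa using this
  have hrginv : ∀ g : G, ∀ u ∈ LinearMap.range f1, V.ρ g u ∈ LinearMap.range f1 := by
    intro g u hu
    obtain ⟨v, rfl⟩ := hu
    exact ⟨ρl g v, hf1comm g v⟩
  have hrange : LinearMap.range f1 = ⊤ := by
    rcases hmodV (LinearMap.range f1) hrginv with h | h
    · exfalso
      apply hf1ne
      ext v
      have : f1 v ∈ LinearMap.range f1 := ⟨v, rfl⟩
      rw [h] at this
      simpa using this
    · exact h
  have hbij : Function.Bijective f1 :=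
    ⟨LinearMap.ker_eq_bot.mp hker, LinearMap.range_eq_top.mp hrange⟩
  -- powers of intertwiners
  have hpowgen : ∀ (g : G) (u : Module.End ℂ V) (a : ℂ),
      V.ρ g * u = a • (u * V.ρ g) → ∀ n : ℕ, V.ρ g * u ^ n = a ^ n • (u ^ n * V.ρ g) := by
    intro g u a hrel n
    induction n with
    | zero => simp
    | succ n ih =>
      rw [pow_succ, ← mul_assoc, ih, Algebra.smul_mul_assoc, mul_assoc, hrel,
        Algebra.mul_smul_comm, smul_smul, pow_succ, ← mul_assoc]
  have hFcomm : ∀ g : G, V.ρ g * f1 ^ p = f1 ^ p * V.ρ g := by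
    intro g
    rw [hpowgen g f1 _ (hf1rel g) p, pow_right_comm, hω1, one_pow, one_smul]
  let Fp : V ⟶ V := { hom := ConcreteCategory.ofHom (f1 ^ p), comm := fun g => by ext v; exact LinearMap.congr_fun (hFcomm g).symm v }
  obtain ⟨c, hc⟩ :=
    (finrank_eq_one_iff_of_nonzero' (𝟙 V) (CategoryTheory.id_nonzero V)).mp hEnd Fp
  have hcEnd : f1 ^ p = c • (1 : Module.End ℂ V) := (congrArg (fun φ => φ.hom.hom.hom) hc).symm
  have hpinj : Function.Injective (f1 ^ p : Module.End ℂ V) := by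
    rw [Module.End.coe_pow]
    exact Function.Injective.iterate hbij.1 p
  have hcne : c ≠ 0 := by
    intro h0
    obtain ⟨v, hv⟩ := exists_ne (0 : V)
    apply hv
    apply hpinj
    rw [map_zero, LinearMap.congr_fun hcEnd v, h0]
    simp
  obtain ⟨z, hz⟩ := IsAlgClosed.exists_pow_nat_eq c hp.pos
  have hzne : z ≠ 0 := by
    intro h0
    rw [h0, zero_pow hp.ne_zero] at hz
    exact hcne hz.symm
  let f : Module.End ℂ V := z⁻¹ • f1
  have hfp : f ^ p = 1 := by
    show (z⁻¹ • f1) ^ p = 1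
    rw [smul_pow, hcEnd, inv_pow, hz, smul_smul, inv_mul_cancel₀ hcne, one_smul]
  have hfrel : ∀ g : G, V.ρ g * f = ω ^ (d g).val • (f * V.ρ g) := by
    intro g
    show V.ρ g * (z⁻¹ • f1) = ω ^ (d g).val • ((z⁻¹ • f1) * V.ρ g)
    rw [Algebra.mul_smul_comm, hf1rel g, Algebra.smul_mul_assoc, smul_smul, smul_smul,
      mul_comm]
  -- the projections
  let Fh : ZMod p → Module.End ℂ V := fun a => f ^ a.val
  have hFh_add : ∀ a b : ZMod p, Fh (a + b) = Fh a * Fh b := by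
    intro a b
    show f ^ (a + b).val = f ^ a.val * f ^ b.val
    rw [pow_val_add hfp]
  have hFh0 : Fh 0 = 1 := by
    show f ^ (0 : ZMod p).val = 1
    rw [ZMod.val_zero, pow_zero]
  have hρFh : ∀ (g : G) (k : ZMod p),
      V.ρ g * Fh k = ω ^ ((d g) * k).val • (Fh k * V.ρ g) := by
    intro g k
    rw [pow_val_mul hω1]
    exact hpowgen g f _ (hfrel g) k.val
  let P : ZMod p → Module.End ℂ V :=
    fun i => (p : ℂ)⁻¹ • ∑ k : ZMod p, ω ^ (-(i * k)).val • Fh k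
  have hPsum : ∑ i : ZMod p, P i = 1 := by
    show ∑ i : ZMod p, (p : ℂ)⁻¹ • ∑ k : ZMod p, ω ^ (-(i * k)).val • Fh k = 1
    rw [← Finset.smul_sum, Finset.sum_comm]
    have hterm : ∀ k : ZMod p, ∑ i : ZMod p, ω ^ (-(i * k)).val • Fh k
        = (if (-k : ZMod p) = 0 then (p : ℂ) else 0) • Fh k := by
      intro k
      rw [← Finset.sum_smul, ← sum_zmod_pow hω (-k)]
      congr 1
      apply Finset.sum_congr rfl
      intro i _
      congr 2
      ring
    rw [Finset.sum_congr rfl (fun k _ => hterm k)]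
    rw [Finset.sum_eq_single 0]
    · rw [if_pos (by simp), hFh0, smul_smul, inv_mul_cancel₀ hpC, one_smul]
    · intro k _ hk
      rw [if_neg (by simpa using hk), zero_smul]
    · intro h
      exact absurd (Finset.mem_univ 0) h
  have hPconj : ∀ (g : G) (i : ZMod p), V.ρ g * P i = P (i - d g) * V.ρ g := by
    intro g i
    show V.ρ g * ((p : ℂ)⁻¹ • ∑ k : ZMod p, ω ^ (-(i * k)).val • Fh k)
      = ((p : ℂ)⁻¹ • ∑ k : ZMod p, ω ^ (-((i - d g) * k)).val • Fh k) * V.ρ g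
    rw [Algebra.mul_smul_comm, Algebra.smul_mul_assoc]
    congr 1
    rw [Finset.mul_sum, Finset.sum_mul]
    apply Finset.sum_congr rfl
    intro k _
    rw [Algebra.mul_smul_comm, hρFh g k, smul_smul, Algebra.smul_mul_assoc]
    rw [← pow_val_add hω1]
    congr 2
    ring
  have hPidem : ∀ i : ZMod p, P i * P i = P i := by
    intro i
    show ((p : ℂ)⁻¹ • ∑ k : ZMod p, ω ^ (-(i * k)).val • Fh k)
        * ((p : ℂ)⁻¹ • ∑ l : ZMod p, ω ^ (-(i * l)).val • Fh l) = P i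
    rw [Algebra.smul_mul_assoc, Algebra.mul_smul_comm, Finset.sum_mul]
    have hrow : ∀ k : ZMod p,
        (ω ^ (-(i * k)).val • Fh k) * (∑ l : ZMod p, ω ^ (-(i * l)).val • Fh l)
          = ∑ s : ZMod p, ω ^ (-(i * s)).val • Fh s := by
      intro k
      rw [Finset.mul_sum]
      refine Fintype.sum_bijective (fun l : ZMod p => k + l)
        (Equiv.addLeft k).bijective _ _ ?_
      intro l
      rw [Algebra.smul_mul_assoc, Algebra.mul_smul_comm, smul_smul, ← hFh_add,
        ← pow_val_add hω1]
      congr 2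
      ring
    rw [Finset.sum_congr rfl (fun k _ => hrow k), Finset.sum_const, Finset.card_univ,
      ZMod.card, ← Nat.cast_smul_eq_nsmul ℂ, smul_smul, smul_smul]
    show ((p:ℂ)⁻¹ * (p:ℂ)⁻¹ * (p:ℂ)) • _ = P i
    rw [mul_assoc, inv_mul_cancel₀ hpC, mul_one]
  have hconjP : ∀ (x : G) (i : ZMod p), V.ρ x * P i * V.ρ x⁻¹ = P (i - d x) := by
    intro x i
    rw [hPconj x i, mul_assoc, ← map_mul, mul_inv_cancel, map_one, mul_one]
  have htreq : ∀ i j : ZMod p,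
      LinearMap.trace ℂ V (P i) = LinearMap.trace ℂ V (P j) := by
    intro i j
    obtain ⟨x, hx⟩ := hd_surj (i - j)
    have h5 : P (i - d x) = V.ρ x * P i * V.ρ x⁻¹ := (hconjP x i).symm
    rw [hx, show i - (i - j) = j from by ring] at h5
    rw [h5, LinearMap.trace_mul_comm, ← mul_assoc, ← map_mul, inv_mul_cancel, map_one,
      one_mul]
  have hPne : ∀ i : ZMod p, P i ≠ 0 := by
    intro i h0
    have hsum : (finrank ℂ V : ℂ) = ∑ j : ZMod p, LinearMap.trace ℂ V (P j) := by
      rw [← map_sum, hPsum, LinearMap.trace_one]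
    have hz : ∀ j : ZMod p, LinearMap.trace ℂ V (P j) = 0 := by
      intro j
      rw [htreq j i, h0, map_zero]
    rw [Finset.sum_congr rfl (fun j _ => hz j), Finset.sum_const, smul_zero] at hsum
    have h6 : finrank ℂ V = 0 := by exact_mod_cast hsum
    have hpos : 0 < finrank ℂ V := finrank_pos
    omega
  
  -- restriction to H and the submodules
  have hPcommH : ∀ (h : ↥H) (i : ZMod p), V.ρ ↑h * P i = P i * V.ρ ↑h := by
    intro h i
    have h1 := hPconj (↑h : G) i
    rw [hd_H ↑h h.2, sub_zero] at h1
    exact h1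
  let resV : FDRep ℂ ↥H := FDRep.of (V.ρ.comp H.subtype)
  let S : ZMod p → Submodule ℂ V := fun i => LinearMap.range (P i)
  have hSinv : ∀ i : ZMod p, ∀ h : ↥H, ∀ u ∈ S i, resV.ρ h u ∈ S i := by
    intro i h u hu
    obtain ⟨v, rfl⟩ := hu
    exact ⟨V.ρ ↑h v, (LinearMap.congr_fun (hPcommH h i) v).symm⟩
  let W : ZMod p → FDRep ℂ ↥H := fun i => subRep resV (S i) (fun h u hu => hSinv i h u hu)
  let ψ' : ZMod p → (↥H → ℂ) := fun i h => LinearMap.trace ℂ V (V.ρ ↑h * P i)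
  have charW : ∀ (i : ZMod p) (h : ↥H), (W i).character h = ψ' i h := by
    intro i h
    exact trace_restrict_eq (P i) (V.ρ ↑h) (hPidem i) (fun u hu => hSinv i h u hu)
  have hWchar_sum : ∀ h : ↥H, V.character ↑h = ∑ i : ZMod p, ψ' i h := by
    intro h
    show LinearMap.trace ℂ V (V.ρ ↑h) = _
    calc LinearMap.trace ℂ V (V.ρ ↑h) = LinearMap.trace ℂ V (V.ρ ↑h * 1) := by rw [mul_one]
      _ = LinearMap.trace ℂ V (V.ρ ↑h * ∑ i : ZMod p, P i) := by rw [hPsum]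
      _ = LinearMap.trace ℂ V (∑ i : ZMod p, V.ρ ↑h * P i) := by rw [Finset.mul_sum]
      _ = ∑ i : ZMod p, LinearMap.trace ℂ V (V.ρ ↑h * P i) := by rw [map_sum]
  have hconjtr : ∀ (x : G) (i : ZMod p) (h : ↥H) (hmem : x⁻¹ * ↑h * x ∈ H),
      ψ' i ⟨x⁻¹ * ↑h * x, hmem⟩ = ψ' (i - d x) h := by
    intro x i h hmem
    show LinearMap.trace ℂ V (V.ρ (x⁻¹ * ↑h * x) * P i)
      = LinearMap.trace ℂ V (V.ρ ↑h * P (i - d x))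
    have h1 : V.ρ (x⁻¹ * ↑h * x) = V.ρ x⁻¹ * (V.ρ ↑h * V.ρ x) := by
      rw [map_mul, map_mul, mul_assoc]
    rw [h1, mul_assoc, LinearMap.trace_mul_comm]
    congr 1
    rw [mul_assoc (V.ρ ↑h), mul_assoc (V.ρ ↑h)]
    rw [hconjP x i]
  -- multiplicities
  have hHC : (Fintype.card ↥H : ℂ) ≠ 0 := by exact_mod_cast Fintype.card_ne_zero
  let m : ZMod p → ZMod p → ℕ := fun i j => finrank ℂ (W j ⟶ W i)
  have hBm : ∀ i j : ZMod p,
      (Fintype.card ↥H : ℂ)⁻¹ * ∑ h : ↥H, ψ' i h * ψ' j h⁻¹ = m i j := by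
    intro i j
    calc (Fintype.card ↥H : ℂ)⁻¹ * ∑ h : ↥H, ψ' i h * ψ' j h⁻¹
        = (Fintype.card ↥H : ℂ)⁻¹ * ∑ h : ↥H, (W i).character h * (W j).character h⁻¹ := by
          congr 1
          apply Finset.sum_congr rfl
          intro h _
          rw [charW, charW]
      _ = m i j := homDim (W i) (W j)
  -- the master count
  have hcards : (Fintype.card G : ℂ) = p * (Fintype.card ↥H : ℂ) := by
    have h1 := H.index_mul_card
    rw [hidx, Nat.card_eq_fintype_card, Nat.card_eq_fintype_card] at h1
    exact_mod_cast h1.symm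
  have hext : ∑ g : G, V.character g * V.character g⁻¹
      = ∑ h : ↥H, V.character ↑h * V.character (↑h)⁻¹ := by
    rw [← Finset.sum_filter_add_sum_filter_not Finset.univ (fun g => g ∈ H)
      (fun g => V.character g * V.character g⁻¹)]
    have h2 : ∑ g ∈ Finset.univ.filter (fun g => g ∉ H),
        V.character g * V.character g⁻¹ = 0 := by
      apply Finset.sum_eq_zero
      intro g hg
      rw [hvanish g (Finset.mem_filter.mp hg).2, zero_mul]
    rw [h2, add_zero]
    exact Finset.sum_subtype _ (fun x => by simp) _
  have hmm : ∑ i : ZMod p, ∑ j : ZMod p, (m i j : ℂ) = p := by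
    calc ∑ i : ZMod p, ∑ j : ZMod p, (m i j : ℂ)
        = ∑ i : ZMod p, ∑ j : ZMod p,
            (Fintype.card ↥H : ℂ)⁻¹ * ∑ h : ↥H, ψ' i h * ψ' j h⁻¹ := by
          apply Finset.sum_congr rfl
          intro i _
          apply Finset.sum_congr rfl
          intro j _
          exact (hBm i j).symm
      _ = (Fintype.card ↥H : ℂ)⁻¹ * ∑ i : ZMod p, ∑ j : ZMod p, ∑ h : ↥H,
            ψ' i h * ψ' j h⁻¹ := by
          simp_rw [← Finset.mul_sum]
      _ = (Fintype.card ↥H : ℂ)⁻¹ * ∑ h : ↥H, ∑ i : ZMod p, ∑ j : ZMod p,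
            ψ' i h * ψ' j h⁻¹ := by
          congr 1
          calc ∑ i : ZMod p, ∑ j : ZMod p, ∑ h : ↥H, ψ' i h * ψ' j h⁻¹
              = ∑ i : ZMod p, ∑ h : ↥H, ∑ j : ZMod p, ψ' i h * ψ' j h⁻¹ := by
                apply Finset.sum_congr rfl
                intro i _
                exact Finset.sum_comm
            _ = ∑ h : ↥H, ∑ i : ZMod p, ∑ j : ZMod p, ψ' i h * ψ' j h⁻¹ :=
                Finset.sum_comm
      _ = (Fintype.card ↥H : ℂ)⁻¹ * ∑ h : ↥H,
            (∑ i : ZMod p, ψ' i h) * (∑ j : ZMod p, ψ' j h⁻¹) := by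
          congr 1
          apply Finset.sum_congr rfl
          intro h _
          rw [Finset.sum_mul_sum]
      _ = (Fintype.card ↥H : ℂ)⁻¹ * ∑ h : ↥H, V.character ↑h * V.character (↑h)⁻¹ := by
          congr 1
          apply Finset.sum_congr rfl
          intro h _
          rw [← hWchar_sum h, ← hWchar_sum h⁻¹]
          rfl
      _ = (Fintype.card ↥H : ℂ)⁻¹ * ∑ g : G, V.character g * V.character g⁻¹ := by
          rw [hext]
      _ = (p : ℂ) := by
          have h3 : (Fintype.card ↥H : ℂ)⁻¹ = p * (Fintype.card G : ℂ)⁻¹ := by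
            rw [hcards]
            have : (Fintype.card G : ℂ) ≠ 0 := by exact_mod_cast Fintype.card_ne_zero
            field_simp
          rw [h3, mul_assoc, hBVV, mul_one]
  have hmN : ∑ i : ZMod p, ∑ j : ZMod p, m i j = p := by exact_mod_cast hmm
  -- diagonal entries are at least one
  have hntW : ∀ i : ZMod p, Nontrivial (W i) := by
    intro i
    have h1 : S i ≠ ⊥ := by
      intro h0
      exact hPne i (LinearMap.range_eq_bot.mp h0)
    exact Submodule.nontrivial_iff_ne_bot.mpr h1
  have hid_ne : ∀ i : ZMod p, (𝟙 (W i) : W i ⟶ W i) ≠ 0 := by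
    intro i h0
    have hid : (LinearMap.id : W i →ₗ[ℂ] W i) = 0 := congrArg (fun φ => φ.hom.hom.hom) h0
    obtain ⟨x, y, hxy⟩ := (hntW i).exists_pair_ne
    exact hxy ((LinearMap.congr_fun hid x).trans (LinearMap.congr_fun hid y).symm)
  have hdiag : ∀ i : ZMod p, 1 ≤ m i i := by
    intro i
    have h1 : Nontrivial (W i ⟶ W i) := ⟨𝟙 (W i), 0, hid_ne i⟩
    exact Module.finrank_pos_iff.mpr h1
  -- combinatorics
  have hcardZp : ∑ _i : ZMod p, (1 : ℕ) = p := by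
    rw [Finset.sum_const, Finset.card_univ, ZMod.card, smul_eq_mul, mul_one]
  have hrow_le : ∀ i ∈ (Finset.univ : Finset (ZMod p)), m i i ≤ ∑ j : ZMod p, m i j :=
    fun i _ => Finset.single_le_sum (fun j _ => Nat.zero_le _) (Finset.mem_univ i)
  have hdsum : ∑ i : ZMod p, m i i = p := by
    have hle1 : ∑ _i : ZMod p, (1 : ℕ) ≤ ∑ i : ZMod p, m i i :=
      Finset.sum_le_sum (fun i _ => hdiag i)
    have hle2 : ∑ i : ZMod p, m i i ≤ ∑ i : ZMod p, ∑ j : ZMod p, m i j :=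
      Finset.sum_le_sum hrow_le
    omega
  have hrows : ∀ i : ZMod p, ∑ j : ZMod p, m i j = m i i := by
    have h1 : ∑ i : ZMod p, m i i = ∑ i : ZMod p, ∑ j : ZMod p, m i j := by omega
    exact fun i => ((Finset.sum_eq_sum_iff_of_le hrow_le).mp h1 i (Finset.mem_univ i)).symm
  have hdiag1 : ∀ i : ZMod p, m i i = 1 := by
    have h1 : ∑ i : ZMod p, (1 : ℕ) = ∑ i : ZMod p, m i i := by omega
    exact fun i =>
      ((Finset.sum_eq_sum_iff_of_le (fun i _ => hdiag i)).mp h1 i (Finset.mem_univ i)).symm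
  have hoff : ∀ i j : ZMod p, i ≠ j → m i j = 0 := by
    intro i j hij
    have h1 : m i i + ∑ k ∈ Finset.univ.erase i, m i k = ∑ k : ZMod p, m i k :=
      Finset.add_sum_erase Finset.univ (fun k => m i k) (Finset.mem_univ i)
    rw [hrows i] at h1
    have h2 : ∑ k ∈ Finset.univ.erase i, m i k = 0 := by omega
    have h3 := (Finset.sum_eq_zero_iff).mp h2
    exact h3 j (Finset.mem_erase.mpr ⟨hij.symm, Finset.mem_univ j⟩)
  -- the characters are pairwise distinct
  have hinjψ : Function.Injective ψ' := by
    intro i j hij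
    by_contra hne
    have h1 := hBm i j
    rw [hij] at h1
    have h2 := hBm j j
    have h3 : (m i j : ℂ) = (m j j : ℂ) := by rw [← h1, ← h2]
    rw [hoff i j hne, hdiag1 j] at h3
    exact absurd h3 (by norm_num)
  -- each W i is simple
  have hWsimple : ∀ i : ZMod p, Simple (W i) := by
    intro i
    apply simple_of_invariant_trivial (W i) (hntW i)
    intro U hU
    by_contra hcon
    push_neg at hcon
    obtain ⟨hUb, hUt⟩ := hcon
    obtain ⟨q, hqcomm, hqU, hqid⟩ := exists_equivariant_proj (W i) U hU
    let π : W i ⟶ W i := { hom := ConcreteCategory.ofHom q, comm := fun h => by ext v; exact LinearMap.congr_fun (hqcomm h) v }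
    have hm1 : finrank ℂ (W i ⟶ W i) = 1 := hdiag1 i
    obtain ⟨cq, hcq⟩ := (finrank_eq_one_iff_of_nonzero' (𝟙 (W i)) (hid_ne i)).mp hm1 π
    have hq_eq : q = cq • (LinearMap.id : W i →ₗ[ℂ] W i) := (congrArg (fun φ => φ.hom.hom.hom) hcq).symm
    obtain ⟨u, hu, hune⟩ := Submodule.exists_mem_ne_zero_of_ne_bot hUb
    have h1 : q u = u := hqid u hu
    rw [hq_eq] at h1
    have hcq1 : cq = 1 := by
      have h2 : (cq - 1) • u = 0 := by
        rw [sub_smul, one_smul, sub_eq_zero]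
        exact h1
      rcases smul_eq_zero.mp h2 with h3 | h3
      · have : cq = 1 := by linear_combination h3
        exact this
      · exact absurd h3 hune
    apply hUt
    rw [Submodule.eq_top_iff']
    intro x
    have h4 := hqU x
    rw [hq_eq, hcq1, one_smul] at h4
    exact h4
  -- induced characters
  have hind : ∀ i : ZMod p, indChar H (ψ' i) = V.character := by
    intro i
    funext g
    show (Fintype.card ↥H : ℂ)⁻¹ *
      (∑ x : G, if hx : x⁻¹ * g * x ∈ H then ψ' i ⟨x⁻¹ * g * x, hx⟩ else 0) = V.character g
    by_cases hg : g ∈ H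
    · have hterm : ∀ x : G, (if hx : x⁻¹ * g * x ∈ H then ψ' i ⟨x⁻¹ * g * x, hx⟩ else 0)
          = ψ' (i - d x) ⟨g, hg⟩ := by
        intro x
        have hxmem : x⁻¹ * g * x ∈ H := by
          have h2 := hnorm.conj_mem g hg x⁻¹
          simpa [inv_inv] using h2
        rw [dif_pos hxmem]
        exact hconjtr x i ⟨g, hg⟩ hxmem
      rw [Finset.sum_congr rfl (fun x _ => hterm x)]
      rw [← Fintype.sum_fiberwise d (fun x : G => ψ' (i - d x) ⟨g, hg⟩)]
      have hfib : ∀ b : ZMod p, ∑ x : {x : G // d x = b}, ψ' (i - d ↑x) ⟨g, hg⟩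
          = (Fintype.card ↥H : ℂ) * ψ' (i - b) ⟨g, hg⟩ := by
        intro b
        have h5 : ∀ x : {x : G // d x = b}, ψ' (i - d ↑x) ⟨g, hg⟩ = ψ' (i - b) ⟨g, hg⟩ := by
          intro x
          rw [x.2]
        rw [Finset.sum_congr rfl (fun x _ => h5 x), Finset.sum_const, Finset.card_univ,
          hd_fiber b, ← Nat.cast_smul_eq_nsmul ℂ, smul_eq_mul]
      rw [Finset.sum_congr rfl (fun b _ => hfib b), ← Finset.mul_sum, ← mul_assoc,
        inv_mul_cancel₀ hHC, one_mul]
      rw [show ∑ b : ZMod p, ψ' (i - b) ⟨g, hg⟩ = ∑ j : ZMod p, ψ' j ⟨g, hg⟩ from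
        Fintype.sum_equiv (Equiv.subLeft i) (fun b => ψ' (i - b) ⟨g, hg⟩)
          (fun j => ψ' j ⟨g, hg⟩) (fun b => rfl)]
      exact (hWchar_sum ⟨g, hg⟩).symm
    · rw [hvanish g hg]
      have hterm : ∀ x : G, (if hx : x⁻¹ * g * x ∈ H then ψ' i ⟨x⁻¹ * g * x, hx⟩ else 0)
          = 0 := by
        intro x
        rw [dif_neg]
        intro hx
        apply hg
        have h2 := hnorm.conj_mem _ hx x
        rw [show x * (x⁻¹ * g * x) * x⁻¹ = g from by group] at h2
        exact h2
      rw [Finset.sum_congr rfl (fun x _ => hterm x), Finset.sum_const, smul_zero, mul_zero]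
  -- final assembly
  let eqv : Fin p ≃ ZMod p := (Fintype.equivFinOfCardEq (ZMod.card p)).symm
  refine ⟨fun i => ψ' (eqv i), ?_, ?_, ?_, ?_⟩
  · intro a b hab
    exact eqv.injective (hinjψ hab)
  · intro i
    exact ⟨W (eqv i), hWsimple _, funext (charW _)⟩
  · intro h
    rw [hWchar_sum h]
    exact (Equiv.sum_comp eqv (fun j => ψ' j h)).symm
  · intro i
    exact hind (eqv i)
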